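/- Let R be a commutative ring and s, a ∈ R with s(s−1) = a. For m ≥ 0, let A'_m be the (m+1)×(m+1) tridiagonal matrix with diagonal entries 0, −1, −2, …, −m (top-left to bottom-right), superdiagonal entries m s, (m−1)s, …, s, and subdiagonal entries 1·(s−1), 2·(s−1), …, m·(s−1). Then det A'_m = Π_{k=0}^{m} ((m−2k)s − m + k). -/

import Mathlib

namespace Stmt9Aux
open MvPolynomial Finset

noncomputable section

/- ### Finsupp helpers -/

lemma fin2_decomp (d : Fin 2 →₀ ℕ) :
    d = Finsupp.single 0 (d 0) + Finsupp.single 1 (d 1) := by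
  ext x; fin_cases x <;> simp [Finsupp.single_apply]

lemma msum_eq {a b c d : ℕ} :
    (Finsupp.single (0 : Fin 2) a + Finsupp.single 1 b)
      = Finsupp.single 0 c + Finsupp.single 1 d ↔ a = c ∧ b = d := by
  constructor
  · intro h
    have h0 := DFunLike.congr_fun h (0 : Fin 2)
    have h1 := DFunLike.congr_fun h (1 : Fin 2)
    simp [Finsupp.single_apply] at h0 h1
    exact ⟨h0, h1⟩
  · rintro ⟨rfl, rfl⟩; rfl

lemma deg2 (d : Fin 2 →₀ ℕ) : d.degree = d 0 + d 1 := by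
  show ∑ i ∈ d.support, d i = d 0 + d 1
  rw [Finset.sum_subset (Finset.subset_univ _) (by
    intro x _ hx; simpa [Finsupp.notMem_support_iff] using hx)]
  simp [Fin.sum_univ_two]

lemma XX_eq {F : Type*} [CommRing F] (a b : ℕ) (c : F) :
    C c * X (0 : Fin 2) ^ a * X 1 ^ b
      = monomial (Finsupp.single 0 a + Finsupp.single 1 b) c := by
  rw [X_pow_eq_monomial, X_pow_eq_monomial, C_apply, monomial_mul, monomial_mul, mul_one, mul_one,
    zero_add]

lemma hX {F : Type*} [CommRing F] (i : Fin 2) :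
    (X i : MvPolynomial (Fin 2) F) = monomial (Finsupp.single i 1) 1 := by
  rw [← pow_one (X i), X_pow_eq_monomial]

/- ### basic objects -/

variable {F : Type*} [CommRing F]

def μmon (m : ℕ) (j : Fin (m + 1)) : Fin 2 →₀ ℕ :=
  Finsupp.single 0 (j : ℕ) + Finsupp.single 1 (m - (j : ℕ))

def uu : MvPolynomial (Fin 2) F := X 0 + X 1
def vv (σ : F) : MvPolynomial (Fin 2) F := C σ * X 0 + C (1 - σ) * X 1

def TT (σ : F) (p : MvPolynomial (Fin 2) F) : MvPolynomial (Fin 2) F :=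
  (C (σ - 1) * X 1 - X 0) * pderiv 0 p + (C σ * X 0) * pderiv 1 p

def MM (σ : F) (m : ℕ) (r j : Fin (m+1)) : F :=
  if (r : ℕ) = (j : ℕ) then -(((j : ℕ)) : F)
  else if (r : ℕ) + 1 = (j : ℕ) then (((r : ℕ) : F) + 1) * (σ - 1)
  else if (r : ℕ) = (j : ℕ) + 1 then ((m : F) - ((j : ℕ) : F)) * σ
  else 0

/- ### T is a derivation with eigenvectors u^k v^(m-k) -/

lemma TT_sum (σ : F) {α : Type*} (s : Finset α) (f : α → MvPolynomial (Fin 2) F) :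
    TT σ (∑ j ∈ s, f j) = ∑ j ∈ s, TT σ (f j) := by
  simp [TT, map_sum, Finset.mul_sum, Finset.sum_add_distrib]

lemma TT_mul (σ : F) (f g : MvPolynomial (Fin 2) F) :
    TT σ (f * g) = TT σ f * g + f * TT σ g := by
  simp only [TT, pderiv_mul]; ring

lemma TT_pow (σ : F) (f : MvPolynomial (Fin 2) F) (c : F) (hf : TT σ f = C c * f) (n : ℕ) :
    TT σ (f ^ n) = C (n * c) * f ^ n := by
  induction n with
  | zero => simp [TT]
  | succ k ih =>
      rw [pow_succ, TT_mul, ih, hf]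
      rw [Nat.cast_add, Nat.cast_one, add_mul, one_mul, C_add]
      ring

lemma TT_u (σ : F) : TT σ (uu : MvPolynomial (Fin 2) F) = C (σ - 1) * uu := by
  simp [TT, uu]; ring

lemma TT_v (σ : F) : TT σ (vv σ) = C (-σ) * vv σ := by
  simp [TT, vv]; ring

lemma TT_q (σ : F) (m k : ℕ) :
    TT σ (uu ^ k * vv σ ^ (m - k)) =
      C ((k : F) * (σ - 1) - ((m - k : ℕ) : F) * σ) * (uu ^ k * vv σ ^ (m - k)) := by
  rw [TT_mul, TT_pow σ uu (σ - 1) (TT_u σ), TT_pow σ (vv σ) (-σ) (TT_v σ)]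
  rw [show (k : F) * (σ - 1) - ((m - k : ℕ) : F) * σ
      = (k : F) * (σ - 1) + ((m - k : ℕ) : F) * (-σ) by ring]
  rw [C_add]; ring

/- ### homogeneity and expansion -/

lemma homog_expand {m : ℕ} {p : MvPolynomial (Fin 2) F} (hp : p.IsHomogeneous m) :
    p = ∑ j : Fin (m + 1), monomial (μmon m j) (coeff (μmon m j) p) := by
  apply MvPolynomial.ext
  intro d
  rw [coeff_sum]
  simp only [coeff_monomial]
  by_cases hd : d 0 + d 1 = m
  · have hle : d 0 ≤ m := by omega
    have key : ∀ j : Fin (m + 1), (μmon m j = d) ↔ j = ⟨d 0, by omega⟩ := by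
      intro j
      constructor
      · intro h
        have h0 := DFunLike.congr_fun h (0 : Fin 2)
        simp [μmon, Finsupp.single_apply] at h0
        exact Fin.ext (by simp [h0])
      · rintro rfl
        conv_rhs => rw [fin2_decomp d]
        rw [μmon, msum_eq]
        exact ⟨rfl, by simp; omega⟩
    calc coeff d p
        = ∑ j : Fin (m+1), if j = ⟨d 0, by omega⟩ then coeff d p else 0 := by
          rw [Finset.sum_ite_eq' Finset.univ]; simp
      _ = ∑ j : Fin (m+1), if μmon m j = d then coeff (μmon m j) p else 0 := by
          apply Finset.sum_congr rfl
          intro j _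
          by_cases h : μmon m j = d
          · rw [if_pos h, if_pos ((key j).mp h), h]
          · rw [if_neg h, if_neg (fun hh => h ((key j).mpr hh))]
  · have h0 : coeff d p = 0 := hp.coeff_eq_zero (by rw [deg2]; exact hd)
    rw [h0]
    symm
    apply Finset.sum_eq_zero
    intro j _
    rw [if_neg]
    intro h
    rw [μmon, fin2_decomp d, msum_eq] at h
    have hj : (j : ℕ) ≤ m := by omega
    omega

lemma uu_homog : (uu : MvPolynomial (Fin 2) F).IsHomogeneous 1 :=
  (isHomogeneous_X _ _).add (isHomogeneous_X _ _)

lemma vv_homog (σ : F) : (vv σ).IsHomogeneous 1 := by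
  have h0 : (C σ * X 0 : MvPolynomial (Fin 2) F).IsHomogeneous 1 := by
    simpa using (isHomogeneous_C _ σ).mul (isHomogeneous_X _ 0)
  have h1 : (C (1-σ) * X 1 : MvPolynomial (Fin 2) F).IsHomogeneous 1 := by
    simpa using (isHomogeneous_C _ (1-σ)).mul (isHomogeneous_X _ 1)
  exact h0.add h1

lemma q_homog (σ : F) {m k : ℕ} (hk : k ≤ m) :
    ((uu : MvPolynomial (Fin 2) F) ^ k * vv σ ^ (m - k)).IsHomogeneous m := by
  have := (uu_homog.pow k).mul ((vv_homog σ).pow (m - k))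
  simpa [one_mul, Nat.add_sub_cancel' hk] using this

/- ### coefficient of T on monomials -/

lemma TT_monomial (σ : F) (a b : ℕ) (c : F) :
    TT σ (monomial (Finsupp.single 0 a + Finsupp.single 1 b) c) =
      monomial (Finsupp.single 0 (a-1) + Finsupp.single 1 (b+1)) (c * a * (σ - 1))
      - monomial (Finsupp.single 0 (a-1+1) + Finsupp.single 1 b) (c * a)
      + monomial (Finsupp.single 0 (a+1) + Finsupp.single 1 (b-1)) (c * b * σ) := by
  have e0 : ((Finsupp.single (0:Fin 2) a + Finsupp.single 1 b) - Finsupp.single 0 1)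
      = Finsupp.single 0 (a-1) + Finsupp.single 1 b := by
    ext x; fin_cases x <;> simp [Finsupp.tsub_apply, Finsupp.single_apply]
  have e1 : ((Finsupp.single (0:Fin 2) a + Finsupp.single 1 b) - Finsupp.single 1 1)
      = Finsupp.single 0 a + Finsupp.single 1 (b-1) := by
    ext x; fin_cases x <;> simp [Finsupp.tsub_apply, Finsupp.single_apply]
  have v0 : (Finsupp.single (0:Fin 2) a + Finsupp.single 1 b : Fin 2 →₀ ℕ) 0 = a := by
    simp [Finsupp.single_apply]
  have v1 : (Finsupp.single (0:Fin 2) a + Finsupp.single 1 b : Fin 2 →₀ ℕ) 1 = b := by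
    simp [Finsupp.single_apply]
  rw [TT, pderiv_monomial, pderiv_monomial, e0, e1, v0, v1]
  rw [sub_mul, hX, hX, C_apply, C_apply]
  simp only [monomial_mul]
  have E1 : ((0 : Fin 2 →₀ ℕ) + Finsupp.single 1 1) + (Finsupp.single 0 (a-1) + Finsupp.single 1 b)
      = Finsupp.single 0 (a-1) + Finsupp.single 1 (b+1) := by
    ext x; fin_cases x <;> simp [Finsupp.single_apply] <;> omega
  have E2 : (Finsupp.single (0:Fin 2) 1) + (Finsupp.single 0 (a-1) + Finsupp.single 1 b)
      = Finsupp.single 0 (a-1+1) + Finsupp.single 1 b := by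
    ext x; fin_cases x <;> simp [Finsupp.single_apply] <;> omega
  have E3 : ((0 : Fin 2 →₀ ℕ) + Finsupp.single 0 1) + (Finsupp.single 0 a + Finsupp.single 1 (b-1))
      = Finsupp.single 0 (a+1) + Finsupp.single 1 (b-1) := by
    ext x; fin_cases x <;> simp [Finsupp.single_apply] <;> omega
  rw [E1, E2, E3, show (σ-1)*1*(c*(a:F)) = c*a*(σ-1) from by ring,
    show (1:F)*(c*(a:F)) = c*a from by ring, show σ*1*(c*(b:F)) = c*b*σ from by ring]

lemma coeff_TT_monomial (σ : F) (m : ℕ) (r j : Fin (m+1)) (c : F) :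
    coeff (μmon m r) (TT σ (monomial (μmon m j) c)) = MM σ m r j * c := by
  have hr : (r : ℕ) ≤ m := by omega
  have hj : (j : ℕ) ≤ m := by omega
  rw [μmon, μmon, TT_monomial]
  rw [coeff_add, coeff_sub, coeff_monomial, coeff_monomial, coeff_monomial]
  simp only [msum_eq, MM]
  split_ifs <;> try (exfalso; omega)
  all_goals try ring
  all_goals
    first
      | (have hjr : (j:ℕ) = (r:ℕ)+1 := by omega
         rw [hjr]; push_cast; ring)
      | (rw [Nat.cast_sub hj]; ring)
      | (have hj0 : (j:ℕ) = 0 := by omega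
         rw [hj0]; push_cast; ring)

end
end Stmt9Aux
namespace Stmt9Aux
open MvPolynomial Finset
noncomputable section
variable {F : Type*} [Field F]

def ψinv (σ : F) : MvPolynomial (Fin 2) F →ₐ[F] MvPolynomial (Fin 2) F :=
  aeval ![C ((1-2*σ)⁻¹) * (C (1-σ) * X 0 - X 1), C ((1-2*σ)⁻¹) * (X 1 - C σ * X 0)]

lemma C_helper (σ : F) (h2 : (1:F) - 2*σ ≠ 0) :
    C ((1-2*σ)⁻¹) * ((1:MvPolynomial (Fin 2) F) - 2 * C σ) = 1 := by
  have : ((1:MvPolynomial (Fin 2) F) - 2 * C σ) = C (1-2*σ) := by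
    rw [C_sub, C_mul, C_1, map_ofNat]
  rw [this, ← C_mul, inv_mul_cancel₀ h2, C_1]

lemma ψinv_u (σ : F) (h2 : (1:F) - 2*σ ≠ 0) : ψinv σ (uu : MvPolynomial (Fin 2) F) = X 0 := by
  have e1 : (C (1-σ) : MvPolynomial (Fin 2) F) = 1 - C σ := by rw [C_sub, C_1]
  have e2 := C_helper σ h2
  rw [uu, map_add, ψinv, aeval_X, aeval_X]
  simp only [Matrix.cons_val_zero, Matrix.cons_val_one, Matrix.head_cons]
  linear_combination (C ((1-2*σ)⁻¹) : MvPolynomial (Fin 2) F) * X 0 * e1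
    + (X 0 : MvPolynomial (Fin 2) F) * e2

lemma ψinv_v (σ : F) (h2 : (1:F) - 2*σ ≠ 0) : ψinv σ (vv σ) = X 1 := by
  have e1 : (C (1-σ) : MvPolynomial (Fin 2) F) = 1 - C σ := by rw [C_sub, C_1]
  have e2 := C_helper σ h2
  rw [vv, map_add, map_mul, map_mul, ψinv, aeval_X, aeval_X, aeval_C, aeval_C]
  simp only [Matrix.cons_val_zero, Matrix.cons_val_one, Matrix.head_cons, algebraMap_eq]
  linear_combination (C ((1-2*σ)⁻¹) : MvPolynomial (Fin 2) F) * X 1 * e1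
    + (X 1 : MvPolynomial (Fin 2) F) * e2

lemma ψinv_q (σ : F) (h2 : (1:F) - 2*σ ≠ 0) (k l : ℕ) :
    ψinv σ ((uu : MvPolynomial (Fin 2) F) ^ k * vv σ ^ l) = X 0 ^ k * X 1 ^ l := by
  rw [map_mul, map_pow, map_pow, ψinv_u σ h2, ψinv_v σ h2]

/- ### the matrices -/

def PP (σ : F) (m : ℕ) : Matrix (Fin (m+1)) (Fin (m+1)) F :=
  Matrix.of fun r k => coeff (μmon m r) ((uu : MvPolynomial (Fin 2) F) ^ (k:ℕ) * vv σ ^ (m - (k:ℕ)))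

def PP' (σ : F) (m : ℕ) : Matrix (Fin (m+1)) (Fin (m+1)) F :=
  Matrix.of fun r k => coeff (μmon m r) (ψinv σ ((X 0 : MvPolynomial (Fin 2) F) ^ (k:ℕ) * X 1 ^ (m - (k:ℕ))))

def DD (σ : F) (m : ℕ) : Matrix (Fin (m+1)) (Fin (m+1)) F :=
  Matrix.diagonal (fun k : Fin (m+1) => ((k:ℕ) : F) * (σ-1) - ((m - (k:ℕ) : ℕ) : F) * σ)

lemma expand_q (σ : F) (m : ℕ) (k : Fin (m+1)) :
    (uu : MvPolynomial (Fin 2) F) ^ (k:ℕ) * vv σ ^ (m - (k:ℕ))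
      = ∑ j : Fin (m+1), monomial (μmon m j) (PP σ m j k) :=
  homog_expand (q_homog σ (by omega))

lemma MP_PD (σ : F) (m : ℕ) : (Matrix.of (MM σ m)) * PP σ m = PP σ m * DD σ m := by
  ext r k
  rw [Matrix.mul_apply, DD, Matrix.mul_diagonal]
  calc ∑ j, Matrix.of (MM σ m) r j * PP σ m j k
      = ∑ j, coeff (μmon m r) (TT σ (monomial (μmon m j) (PP σ m j k))) := by
        apply Finset.sum_congr rfl
        intro j _
        rw [coeff_TT_monomial]
        rfl
    _ = coeff (μmon m r) (TT σ (∑ j, monomial (μmon m j) (PP σ m j k))) := by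
        rw [TT_sum, coeff_sum]
    _ = coeff (μmon m r) (TT σ ((uu : MvPolynomial (Fin 2) F) ^ (k:ℕ) * vv σ ^ (m - (k:ℕ)))) := by
        rw [← expand_q]
    _ = (((k:ℕ) : F) * (σ-1) - ((m - (k:ℕ) : ℕ) : F) * σ) * PP σ m r k := by
        rw [TT_q, coeff_C_mul]
        rfl
    _ = PP σ m r k * (((k:ℕ) : F) * (σ-1) - ((m - (k:ℕ) : ℕ) : F) * σ) := mul_comm _ _

lemma ψinv_monomial (σ : F) (m : ℕ) (j : Fin (m+1)) (c : F) :
    ψinv σ (monomial (μmon m j) c)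
      = C c * ψinv σ ((X 0 : MvPolynomial (Fin 2) F) ^ (j:ℕ) * X 1 ^ (m - (j:ℕ))) := by
  rw [μmon, ← XX_eq, mul_assoc, map_mul]
  congr 1
  have h := (ψinv σ).commutes c
  rwa [algebraMap_eq] at h

lemma P'P (σ : F) (h2 : (1:F) - 2*σ ≠ 0) (m : ℕ) : PP' σ m * PP σ m = 1 := by
  ext r k
  rw [Matrix.mul_apply]
  calc ∑ j, PP' σ m r j * PP σ m j k
      = ∑ j, coeff (μmon m r) (ψinv σ (monomial (μmon m j) (PP σ m j k))) := by
        apply Finset.sum_congr rfl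
        intro j _
        rw [ψinv_monomial, coeff_C_mul, mul_comm]
        rfl
    _ = coeff (μmon m r) (ψinv σ (∑ j, monomial (μmon m j) (PP σ m j k))) := by
        rw [map_sum, coeff_sum]
    _ = coeff (μmon m r) ((X 0 : MvPolynomial (Fin 2) F) ^ (k:ℕ) * X 1 ^ (m - (k:ℕ))) := by
        rw [← expand_q, ψinv_q σ h2]
    _ = (1 : Matrix (Fin (m+1)) (Fin (m+1)) F) r k := by
        rw [show ((X 0 : MvPolynomial (Fin 2) F) ^ (k:ℕ) * X 1 ^ (m - (k:ℕ)))
            = C 1 * X 0 ^ (k:ℕ) * X 1 ^ (m - (k:ℕ)) from by rw [C_1, one_mul]]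
        rw [XX_eq, coeff_monomial, μmon, Matrix.one_apply]
        have hr : (r : ℕ) ≤ m := by omega
        have hk : (k : ℕ) ≤ m := by omega
        by_cases h : r = k
        · rw [if_pos h, if_pos]
          rw [msum_eq, h]
          exact ⟨rfl, rfl⟩
        · rw [if_neg h, if_neg]
          rw [msum_eq]
          rintro ⟨h1, -⟩
          exact h (Fin.ext h1.symm)

/- ### core determinant computation over a field -/

theorem core_det (σ : F) (h2 : (1:F) - 2*σ ≠ 0) (m : ℕ) :
    (Matrix.of (MM σ m)).det
      = ∏ k ∈ Finset.range (m+1), (((m : F) - 2 * (k : F)) * σ - (m : F) + (k : F)) := by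
  have h1 : (Matrix.of (MM σ m)).det * (PP σ m).det = (PP σ m).det * (DD σ m).det := by
    rw [← Matrix.det_mul, ← Matrix.det_mul, MP_PD]
  have h3 : (PP' σ m).det * (PP σ m).det = 1 := by
    rw [← Matrix.det_mul, P'P σ h2, Matrix.det_one]
  have h4 : (Matrix.of (MM σ m)).det = (DD σ m).det := by
    calc (Matrix.of (MM σ m)).det
        = (Matrix.of (MM σ m)).det * ((PP σ m).det * (PP' σ m).det) := by
          rw [mul_comm (PP σ m).det, h3, mul_one]
      _ = ((Matrix.of (MM σ m)).det * (PP σ m).det) * (PP' σ m).det := by ring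
      _ = ((PP σ m).det * (DD σ m).det) * (PP' σ m).det := by rw [h1]
      _ = (DD σ m).det * ((PP' σ m).det * (PP σ m).det) := by ring
      _ = (DD σ m).det := by rw [h3, mul_one]
  rw [h4, DD, Matrix.det_diagonal]
  rw [Fin.prod_univ_eq_prod_range (fun k => ((k : ℕ) : F) * (σ-1) - ((m - k : ℕ) : F) * σ) (m+1)]
  rw [← Finset.prod_range_reflect]
  apply Finset.prod_congr rfl
  intro k hk
  rw [Finset.mem_range] at hk
  have hk' : k ≤ m := by omega
  rw [show m + 1 - 1 - k = m - k from by omega]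
  rw [Nat.cast_sub hk', show m - (m - k) = k from by omega]
  ring

end
end Stmt9Aux
namespace Stmt9Aux
open MvPolynomial Finset
noncomputable section

abbrev R0 := Polynomial ℤ
abbrev FF := FractionRing R0

def A0 (m : ℕ) : Matrix (Fin (m+1)) (Fin (m+1)) R0 :=
  Matrix.of fun i j =>
    if (i : ℕ) = (j : ℕ) then -((i : ℕ) : R0)
    else if (i : ℕ) + 1 = (j : ℕ) then ((m : R0) - ((i : ℕ) : R0)) * Polynomial.X
    else if (j : ℕ) + 1 = (i : ℕ) then (((j : ℕ) : R0) + 1) * (Polynomial.X - 1)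
    else 0

theorem det_A0 (m : ℕ) :
    (A0 m).det = ∏ k ∈ Finset.range (m+1),
      (((m : R0) - 2 * (k : R0)) * Polynomial.X - (m : R0) + (k : R0)) := by
  set ι : R0 →+* FF := algebraMap R0 FF with hι
  have hinj : Function.Injective ι := IsFractionRing.injective R0 FF
  apply hinj
  set σ : FF := ι Polynomial.X with hσ
  have h2 : (1 : FF) - 2 * σ ≠ 0 := by
    have hne : (1 - 2 * Polynomial.X : R0) ≠ 0 := by
      intro h
      have := congrArg (fun p => Polynomial.coeff p 1) h
      simp [Polynomial.coeff_one] at this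
    have : ι (1 - 2 * Polynomial.X) ≠ 0 := fun h => hne (hinj (by simpa using h))
    simpa [map_ofNat] using this
  have hmap : (A0 m).map ι = (Matrix.of (MM σ m)).transpose := by
    ext i j
    simp only [Matrix.map_apply, Matrix.transpose_apply, A0, MM, Matrix.of_apply]
    split_ifs <;> first
      | (exfalso; omega)
      | simp [map_natCast, hσ]
  rw [RingHom.map_det, RingHom.mapMatrix_apply, hmap, Matrix.det_transpose, core_det σ h2 m, map_prod]
  apply Finset.prod_congr rfl
  intro k _
  simp only [map_add, map_sub, map_mul, map_neg, map_natCast, map_ofNat, hσ]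

end
end Stmt9Aux

/-- Sylvester-type determinant: let A'_m be the (m+1)×(m+1) tridiagonal matrix with
diagonal entries 0, −1, …, −m, superdiagonal entries m·s, (m−1)·s, …, s, and
subdiagonal entries 1·(s−1), …, m·(s−1), where s(s−1) = a. Then
det A'_m = Π_{k=0}^m ((m−2k)s − m + k). -/
theorem stmt9 {R : Type*} [CommRing R] (s a : R) (hs : s * (s - 1) = a) (m : ℕ)
    (A : Matrix (Fin (m+1)) (Fin (m+1)) R)
    (hA : ∀ i j : Fin (m+1),
      A i j =
        if (i : ℕ) = (j : ℕ) then -((i : ℕ) : R)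
        else if (i : ℕ) + 1 = (j : ℕ) then ((m : R) - (i : ℕ)) * s
        else if (j : ℕ) + 1 = (i : ℕ) then (((j : ℕ) : R) + 1) * (s - 1)
        else 0) :
    A.det = ∏ k ∈ Finset.range (m+1),
      (((m : R) - 2 * (k : R)) * s - (m : R) + (k : R)) := by
  classical
  let φ : Stmt9Aux.R0 →+* R := (Polynomial.aeval s).toRingHom
  have hφX : φ Polynomial.X = s := Polynomial.aeval_X s
  have hAmap : A = (Stmt9Aux.A0 m).map φ := by
    ext i j
    rw [hA]
    simp only [Matrix.map_apply, Stmt9Aux.A0, Matrix.of_apply]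
    split_ifs <;> simp [map_natCast, hφX]
  rw [hAmap, ← RingHom.mapMatrix_apply, ← RingHom.map_det, Stmt9Aux.det_A0, map_prod]
  apply Finset.prod_congr rfl
  intro k _
  simp only [map_add, map_sub, map_mul, map_neg, map_natCast, map_ofNat, hφX]
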